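/- arXiv:1210.5319 — 2 statements merged into one kernel-verified Lean document; each statement's English description precedes it below -/
import Mathlib

section
/- With β_n : V^{⊗n} → V^{⊗n} the Dynkin–Specht–Wever map over a field of characteristic 0 (or over ℤ_(2)), one has β_n ∘ β_n = n · β_n. Consequently, if n is odd (hence n is invertible in ℤ_(2)), the map (1/n)·β_n is idempotent. -/
open Equiv MonoidAlgebra

/-- The Dynkin–Specht–Wever element in the rational group algebra of the symmetric group
(permutations of `ℕ`, with the `n`-th stage supported on permutations of `{0, …, n-1}`):
`β 2 = 1 - (1,2)` and `β (n+1) = (1 - σ_{n+1}) * β n`, where `σ_m` is the cycle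
`(1, 2, …, m)` (realized as `List.formPerm` of `0, 1, …, m-1`). -/
noncomputable def dswElement : ℕ → MonoidAlgebra ℚ (Equiv.Perm ℕ)
  | 0 => 1
  | 1 => 1
  | 2 => 1 - MonoidAlgebra.of ℚ (Equiv.Perm ℕ) (Equiv.swap 0 1)
  | (n + 3) =>
      (1 - MonoidAlgebra.of ℚ (Equiv.Perm ℕ) ((List.range (n + 3)).formPerm)) *
        dswElement (n + 2)

noncomputable section DSW

namespace DSWAux

/-- word algebra -/
abbrev WA : Type := MonoidAlgebra ℚ (FreeMonoid ℕ)

def mono (l : List ℕ) : WA := MonoidAlgebra.of ℚ (FreeMonoid ℕ) (FreeMonoid.ofList l)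

def xx (a : ℕ) : WA := mono [a]

lemma mono_append (l t : List ℕ) : mono (l ++ t) = mono l * mono t := by
  simp [mono, ← map_mul]

def brk (u v : WA) : WA := u * v - v * u

/-- left-normed bracketing of a word -/
def Dyn : List ℕ → WA
  | [] => 0
  | a :: t => t.foldl (fun acc b => brk acc (xx b)) (xx a)

lemma Dyn_append_singleton {l : List ℕ} (hl : l ≠ []) (a : ℕ) :
    Dyn (l ++ [a]) = brk (Dyn l) (xx a) := by
  cases l with
  | nil => simp at hl
  | cons b t => simp [Dyn, List.foldl_append]


/-- linear extension of `Dyn` to the word algebra -/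
def Dlin : WA →ₗ[ℚ] WA :=
  Finsupp.linearCombination ℚ (fun w : FreeMonoid ℕ => Dyn (FreeMonoid.toList w)) ∘ₗ
    (MonoidAlgebra.coeffLinearEquiv ℚ).toLinearMap

lemma Dlin_mono (l : List ℕ) : Dlin (mono l) = Dyn l := by
  rw [mono, MonoidAlgebra.of_apply, Dlin]
  erw [LinearMap.comp_apply, Finsupp.linearCombination_single]
  rw [one_smul, FreeMonoid.toList_ofList]

/-- pure Lie monomials with their degree -/
inductive IsLie : ℕ → WA → Prop
  | gen (a : ℕ) : IsLie 1 (xx a)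
  | brk {m k : ℕ} {u v : WA} : IsLie m u → IsLie k v → IsLie (m + k) (brk u v)

/-- the span of nonempty words -/
def Ideal1 : Submodule ℚ WA := Submodule.span ℚ {w : WA | ∃ l : List ℕ, l ≠ [] ∧ w = mono l}

lemma mul_mem_Ideal1 {P Q : WA} (hP : P ∈ Ideal1) (hQ : Q ∈ Ideal1) : P * Q ∈ Ideal1 := by
  induction hP using Submodule.span_induction with
  | mem x hx =>
    obtain ⟨l, hl, rfl⟩ := hx
    induction hQ using Submodule.span_induction with
    | mem y hy =>
      obtain ⟨t, ht, rfl⟩ := hy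
      rw [← mono_append]
      exact Submodule.subset_span ⟨l ++ t, by simp [hl], rfl⟩
    | zero => rw [mul_zero]; exact Submodule.zero_mem _
    | add y z _ _ h1 h2 => rw [mul_add]; exact Submodule.add_mem _ h1 h2
    | smul c y _ h1 => rw [mul_smul_comm]; exact Submodule.smul_mem _ _ h1
  | zero => rw [zero_mul]; exact Submodule.zero_mem _
  | add y z _ _ h1 h2 => rw [add_mul]; exact Submodule.add_mem _ h1 h2
  | smul c y _ h1 => rw [smul_mul_assoc]; exact Submodule.smul_mem _ _ h1

lemma IsLie.mem_Ideal1 {k : ℕ} {u : WA} (h : IsLie k u) : u ∈ Ideal1 := by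
  induction h with
  | gen a => exact Submodule.subset_span ⟨[a], by simp, rfl⟩
  | brk h1 h2 ih1 ih2 =>
    exact Submodule.sub_mem _ (mul_mem_Ideal1 ih1 ih2) (mul_mem_Ideal1 ih2 ih1)

lemma lemma1 {k : ℕ} {u : WA} (hu : IsLie k u) :
    ∀ P ∈ Ideal1, Dlin (P * u) = brk (Dlin P) u := by
  induction hu with
  | gen a =>
    intro P hP
    induction hP using Submodule.span_induction with
    | mem x hx =>
      obtain ⟨l, hl, rfl⟩ := hx
      have : mono l * xx a = mono (l ++ [a]) := by rw [mono_append]; rfl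
      rw [this, Dlin_mono, Dlin_mono, Dyn_append_singleton hl]
    | zero => simp [brk]
    | add y z hy hz h1 h2 => simp only [add_mul, map_add, h1, h2, brk]; noncomm_ring
    | smul c y hy h1 => simp only [smul_mul_assoc, map_smul, h1, brk, smul_sub, mul_smul_comm]
  | @brk m k' v w hv hw ihv ihw =>
    intro P hP
    have hPv : P * v ∈ Ideal1 := mul_mem_Ideal1 hP hv.mem_Ideal1
    have hPw : P * w ∈ Ideal1 := mul_mem_Ideal1 hP hw.mem_Ideal1
    have e1 : P * brk v w = P * v * w - P * w * v := by simp only [brk]; noncomm_ring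
    rw [e1, map_sub, ihw _ hPv, ihv _ hPw, ihv _ hP, ihw _ hP]
    simp only [brk]
    noncomm_ring

lemma lemma2 {k : ℕ} {u : WA} (hu : IsLie k u) : Dlin u = (k : ℚ) • u := by
  induction hu with
  | gen a => rw [show xx a = mono [a] from rfl, Dlin_mono]; simp [Dyn, xx]
  | @brk m k' v w hv hw ihv ihw =>
    have e1 : brk v w = v * w - w * v := rfl
    rw [e1, map_sub, lemma1 hw _ hv.mem_Ideal1, lemma1 hv _ hw.mem_Ideal1, ihv, ihw]
    push_cast
    simp only [brk, smul_sub, smul_mul_assoc, mul_smul_comm, add_smul]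
    noncomm_ring

lemma IsLie_Dyn {l : List ℕ} (hl : l ≠ []) : IsLie l.length (Dyn l) := by
  induction l using List.reverseRecOn with
  | nil => simp at hl
  | append_singleton t a ih =>
    cases t with
    | nil => exact IsLie.gen a
    | cons b r =>
      rw [Dyn_append_singleton (by simp)]
      have := IsLie.brk (ih (by simp)) (IsLie.gen a)
      simpa using this


/-! ### position-list combinatorics -/

/-- move the element at index `m` to the front -/
def xi (m : ℕ) (l : List ℕ) : List ℕ :=
  (l.drop m).take 1 ++ (l.take m ++ l.drop (m + 1))

lemma xi_map (f : ℕ → ℕ) (m : ℕ) (l : List ℕ) : xi m (l.map f) = (xi m l).map f := by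
  simp [xi, List.map_take, List.map_drop]

lemma xi_spec {m : ℕ} {t : List ℕ} (ht : t.length = m) (b : ℕ) (r : List ℕ) :
    xi m (t ++ b :: r) = b :: (t ++ r) := by
  have h1 : (t ++ b :: r).drop m = b :: r := List.drop_left' ht
  have h2 : (t ++ b :: r).take m = t := List.take_left' ht
  have h3 : (t ++ b :: r).drop (m + 1) = r := by
    have : t ++ b :: r = (t ++ [b]) ++ r := by simp
    rw [this]
    exact List.drop_left' (by simp [ht])
  simp [xi, h1, h2, h3]

/-- the `n`-cycle `(0 1 … m)` -/
def cyc (m : ℕ) : Equiv.Perm ℕ := (List.range m).formPerm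

lemma cyc_apply_lt {m i : ℕ} (h : i + 1 < m) : cyc m i = i + 1 := by
  have := List.formPerm_apply_lt_getElem (List.range m) List.nodup_range i
    (by simpa using h)
  simpa [cyc] using this

lemma cyc_apply_self (k : ℕ) : cyc (k + 1) k = 0 := by
  have h := List.formPerm_apply_getElem (List.range (k + 1)) List.nodup_range k (by simp)
  simpa [cyc] using h

lemma cyc_apply_of_ge {m i : ℕ} (h : m ≤ i) : cyc m i = i :=
  List.formPerm_apply_of_notMem (by simp; omega)

lemma cyc_inv_range {m n : ℕ} (h : m + 1 ≤ n) :
    (List.range n).map ⇑(cyc (m + 1))⁻¹ = xi m (List.range n) := by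
  have hinj : Function.Injective ⇑(cyc (m+1)) := Equiv.injective _
  apply List.map_injective_iff.mpr hinj
  have hcancel : (List.map (⇑(cyc (m+1))) (List.map (⇑(cyc (m+1))⁻¹) (List.range n)))
      = List.range n := by
    simp [List.map_map, Function.comp_def]
  rw [hcancel]
  -- now show map (cyc (m+1)) (xi m (range n)) = range n
  have hdrop1 : (List.range n).drop m = m :: (List.range n).drop (m + 1) := by
    have := List.drop_eq_getElem_cons (l := List.range n) (i := m) (by simpa using by omega)
    simpa using this
  have htake : (List.range n).take m = List.range m := by
    rw [List.take_range]; congr 1; omega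
  rw [xi, hdrop1, htake]
  have h1 : cyc (m + 1) m = 0 := cyc_apply_self m
  have h2 : List.map (⇑(cyc (m+1))) (List.range m) = List.map Nat.succ (List.range m) := by
    apply List.map_congr_left
    intro i hi
    simp only [List.mem_range] at hi
    exact cyc_apply_lt (by omega)
  have h3 : List.map (⇑(cyc (m+1))) ((List.range n).drop (m+1)) = (List.range n).drop (m+1) := by
    conv_rhs => rw [← List.map_id ((List.range n).drop (m+1))]
    apply List.map_congr_left
    intro i hi
    obtain ⟨j, hj, rfl⟩ := List.getElem_of_mem hi
    rw [List.getElem_drop]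
    have : (List.range n)[m + 1 + j]'(by simp; simp at hj; omega) = m + 1 + j := by
      simp
    rw [this]
    exact cyc_apply_of_ge (by omega)
  simp only [List.take_succ_cons, List.take_zero, List.map_cons, List.map_nil, List.map_append,
    List.singleton_append, h1, h2, h3]
  rw [← List.cons_append, ← List.range_succ_eq_map]
  have : List.range (m + 1) ++ List.drop (m + 1) (List.range n) = List.range n := by
    conv_rhs => rw [← List.take_append_drop (m + 1) (List.range n)]
    congr 1
    rw [List.take_range]; congr 1; omega
  rw [this]


/-! ### linear maps on the word algebra -/

/-- abbreviation for the group algebra -/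
abbrev GA : Type := MonoidAlgebra ℚ (Equiv.Perm ℕ)

/-- evaluation of the group algebra on the generic word of length `n` -/
def ev (n : ℕ) : GA →ₗ[ℚ] WA :=
  Finsupp.linearCombination ℚ (fun g : Equiv.Perm ℕ => mono ((List.range n).map ⇑g⁻¹)) ∘ₗ
    (MonoidAlgebra.coeffLinearEquiv ℚ).toLinearMap

lemma ev_single (n : ℕ) (g : Equiv.Perm ℕ) (c : ℚ) :
    ev n (MonoidAlgebra.single g c) = c • mono ((List.range n).map ⇑g⁻¹) := by
  rw [ev]; erw [LinearMap.comp_apply, Finsupp.linearCombination_single]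

/-- linear extension of `xi` -/
def Xi (m : ℕ) : WA →ₗ[ℚ] WA :=
  Finsupp.linearCombination ℚ (fun w : FreeMonoid ℕ => mono (xi m (FreeMonoid.toList w))) ∘ₗ
    (MonoidAlgebra.coeffLinearEquiv ℚ).toLinearMap

lemma Xi_mono (m : ℕ) (l : List ℕ) : Xi m (mono l) = mono (xi m l) := by
  rw [mono, MonoidAlgebra.of_apply, Xi]
  erw [LinearMap.comp_apply, Finsupp.linearCombination_single]
  rw [one_smul, FreeMonoid.toList_ofList]

/-- the partial Dynkin operator: bracket the first `m` letters -/
def DmL (m : ℕ) : WA →ₗ[ℚ] WA :=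
  Finsupp.linearCombination ℚ (fun w : FreeMonoid ℕ =>
    Dyn ((FreeMonoid.toList w).take m) * mono ((FreeMonoid.toList w).drop m)) ∘ₗ
    (MonoidAlgebra.coeffLinearEquiv ℚ).toLinearMap

lemma DmL_mono (m : ℕ) (l : List ℕ) : DmL m (mono l) = Dyn (l.take m) * mono (l.drop m) := by
  rw [mono, MonoidAlgebra.of_apply, DmL]
  erw [LinearMap.comp_apply, Finsupp.linearCombination_single]
  rw [one_smul, FreeMonoid.toList_ofList]

/-- span of words of length `k` -/
def Sp (k : ℕ) : Submodule ℚ WA :=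
  Submodule.span ℚ {w : WA | ∃ t : List ℕ, t.length = k ∧ w = mono t}

lemma Dyn_mem_Sp (l : List ℕ) : Dyn l ∈ Sp l.length := by
  induction l using List.reverseRecOn with
  | nil => exact Submodule.zero_mem _
  | append_singleton t a ih =>
    cases t with
    | nil => exact Submodule.subset_span ⟨[a], rfl, rfl⟩
    | cons b r =>
      rw [Dyn_append_singleton (by simp)]
      have hlen : (b :: r).length + 1 = ((b :: r) ++ [a]).length := by simp
      rw [← hlen]
      have key : ∀ u ∈ Sp (b :: r).length, brk u (xx a) ∈ Sp ((b :: r).length + 1) := by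
        intro u hu
        induction hu using Submodule.span_induction with
        | mem x hx =>
          obtain ⟨t', ht', rfl⟩ := hx
          have e1 : mono t' * xx a = mono (t' ++ [a]) := (mono_append _ _).symm
          have e2 : xx a * mono t' = mono (a :: t') := by
            rw [show (a :: t') = [a] ++ t' from rfl, mono_append]; rfl
          refine Submodule.sub_mem _ ?_ ?_
          · rw [e1]; exact Submodule.subset_span ⟨t' ++ [a], by simp [ht'], rfl⟩
          · rw [e2]; exact Submodule.subset_span ⟨a :: t', by simp [ht'], rfl⟩
        | zero => simpa [brk] using Submodule.zero_mem (Sp ((b :: r).length + 1))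
        | add y z _ _ h1 h2 =>
          have : brk (y + z) (xx a) = brk y (xx a) + brk z (xx a) := by
            simp only [brk]; noncomm_ring
          rw [this]; exact Submodule.add_mem _ h1 h2
        | smul c y _ h1 =>
          have : brk (c • y) (xx a) = c • brk y (xx a) := by
            simp only [brk, smul_mul_assoc, mul_smul_comm, smul_sub]
          rw [this]; exact Submodule.smul_mem _ _ h1
      exact key _ ih

lemma ev_mem_Sp (n : ℕ) (z : GA) : ev n z ∈ Sp n := by
  induction z using MonoidAlgebra.induction_linear with
  | zero => simp
  | add f g hf hg => rw [map_add]; exact Submodule.add_mem _ hf hg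
  | single g c =>
    rw [ev_single]
    exact Submodule.smul_mem _ _ (Submodule.subset_span ⟨_, by simp, rfl⟩)

/-- left multiplication by `cyc (m+1)` corresponds to `Xi m` -/
lemma ev_cyc_mul (n m : ℕ) (h : m + 1 ≤ n) (z : GA) :
    ev n (MonoidAlgebra.of ℚ (Equiv.Perm ℕ) (cyc (m + 1)) * z) = Xi m (ev n z) := by
  induction z using MonoidAlgebra.induction_linear with
  | zero => simp
  | add f g hf hg => simp only [mul_add, map_add, hf, hg]
  | single g c =>
    rw [MonoidAlgebra.of_apply, MonoidAlgebra.single_mul_single, one_mul, ev_single, ev_single,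
      map_smul, Xi_mono]
    congr 1
    rw [mul_inv_rev]
    have : (List.range n).map ⇑(g⁻¹ * (cyc (m+1))⁻¹) = ((List.range n).map ⇑(cyc (m+1))⁻¹).map ⇑g⁻¹ := by
      rw [List.map_map]; rfl
    rw [this, cyc_inv_range h, xi_map]

/-- the key word-level identity -/
lemma step_word (m : ℕ) (hm : 1 ≤ m) (w : List ℕ) (hw : m < w.length) :
    DmL m (mono w) - Xi m (DmL m (mono w)) = DmL (m + 1) (mono w) := by
  set b := (w[m]'hw : ℕ)
  have hdrop : w.drop m = b :: w.drop (m + 1) := List.drop_eq_getElem_cons hw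
  have htklen : (w.take m).length = m := by simp; omega
  have hP : Dyn (w.take m) ∈ Sp m := by
    have := Dyn_mem_Sp (w.take m); rwa [htklen] at this
  have key : ∀ P ∈ Sp m, Xi m (P * mono (b :: w.drop (m + 1)))
      = xx b * (P * mono (w.drop (m + 1))) := by
    intro P hPm
    induction hPm using Submodule.span_induction with
    | mem x hx =>
      obtain ⟨t, ht, rfl⟩ := hx
      rw [← mono_append, Xi_mono, xi_spec ht, ← mono_append,
        show (b :: (t ++ w.drop (m+1))) = [b] ++ (t ++ w.drop (m+1)) from rfl, mono_append]
      rfl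
    | zero => simp
    | add y z _ _ h1 h2 => rw [add_mul, map_add, h1, h2, add_mul, mul_add]
    | smul c y _ h1 =>
      rw [smul_mul_assoc, map_smul, h1, smul_mul_assoc, mul_smul_comm]
  rw [DmL_mono, DmL_mono, hdrop, key _ hP]
  have hrest : mono (b :: w.drop (m + 1)) = xx b * mono (w.drop (m + 1)) := by
    rw [show (b :: w.drop (m+1)) = [b] ++ w.drop (m+1) from rfl, mono_append]; rfl
  rw [hrest]
  have htk1 : w.take m ++ [b] = w.take (m + 1) := by
    have := List.take_concat_get hw
    rwa [List.concat_eq_append] at this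
  have hne : w.take m ≠ [] := by
    intro hc
    rw [hc] at htklen
    simp at htklen; omega
  calc Dyn (w.take m) * (xx b * mono (w.drop (m+1))) - xx b * (Dyn (w.take m) * mono (w.drop (m+1)))
      = brk (Dyn (w.take m)) (xx b) * mono (w.drop (m+1)) := by simp only [brk]; noncomm_ring
    _ = Dyn (w.take m ++ [b]) * mono (w.drop (m+1)) := by rw [Dyn_append_singleton hne]
    _ = Dyn (w.take (m+1)) * mono (w.drop (m+1)) := by rw [htk1]


/-! ### the recursion for `dswElement` -/

lemma dsw_succ (m : ℕ) (hm : 1 ≤ m) :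
    dswElement (m + 1)
      = (1 - MonoidAlgebra.of ℚ (Equiv.Perm ℕ) (cyc (m + 1))) * dswElement m := by
  match m, hm with
  | 1, _ =>
    have h2 : List.range 2 = [0, 1] := rfl
    have : cyc 2 = Equiv.swap 0 1 := by rw [cyc, h2, List.formPerm_pair]
    rw [this]
    show dswElement 2 = _ * dswElement 1
    rw [show dswElement 2 = 1 - MonoidAlgebra.of ℚ (Equiv.Perm ℕ) (Equiv.swap 0 1) from rfl,
      show dswElement 1 = 1 from rfl, mul_one]
  | (k + 2), _ =>
    rfl

lemma DmL_one_on_Sp {n : ℕ} (hn : 1 ≤ n) {u : WA} (hu : u ∈ Sp n) : DmL 1 u = u := by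
  induction hu using Submodule.span_induction with
  | mem x hx =>
    obtain ⟨t, ht, rfl⟩ := hx
    cases t with
    | nil => simp at ht; omega
    | cons a r =>
      rw [DmL_mono]
      show Dyn [a] * mono r = mono (a :: r)
      rw [show Dyn [a] = xx a from rfl, show (a :: r) = [a] ++ r from rfl, mono_append]
      rfl
  | zero => simp
  | add y z _ _ h1 h2 => rw [map_add, h1, h2]
  | smul c y _ h1 => rw [map_smul, h1]

lemma DmL_step_on_Sp {n m : ℕ} (hm : 1 ≤ m) (h : m < n) {u : WA} (hu : u ∈ Sp n) :
    DmL m u - Xi m (DmL m u) = DmL (m + 1) u := by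
  induction hu using Submodule.span_induction with
  | mem x hx =>
    obtain ⟨t, ht, rfl⟩ := hx
    exact step_word m hm t (by omega)
  | zero => simp
  | add y z _ _ h1 h2 =>
    simp only [map_add]
    rw [← h1, ← h2]; abel
  | smul c y _ h1 =>
    simp only [map_smul]
    rw [← h1, smul_sub]

lemma claimC {n : ℕ} (m : ℕ) (hm : 1 ≤ m) (hmn : m ≤ n) (z : GA) :
    ev n (dswElement m * z) = DmL m (ev n z) := by
  induction m with
  | zero => omega
  | succ k ih =>
    rcases Nat.eq_or_lt_of_le hm with h1 | h1
    · -- k + 1 = 1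
      have hk : k = 0 := by omega
      subst hk
      rw [show dswElement 1 = 1 from rfl, one_mul]
      exact (DmL_one_on_Sp (by omega) (ev_mem_Sp n z)).symm
    · have hk : 1 ≤ k := by omega
      rw [dsw_succ k hk, sub_mul, one_mul, sub_mul, map_sub, mul_assoc,
        ev_cyc_mul n k (by omega), ih hk (by omega)]
      exact DmL_step_on_Sp hk (by omega) (ev_mem_Sp n z)

lemma ev_one (n : ℕ) : ev n (1 : GA) = mono (List.range n) := by
  rw [MonoidAlgebra.one_def, ev_single, inv_one, one_smul]
  congr 1
  simp

lemma ev_dsw {n : ℕ} (hn : 2 ≤ n) : ev n (dswElement n) = Dyn (List.range n) := by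
  have := claimC (n := n) n (by omega) le_rfl 1
  rw [mul_one, ev_one, DmL_mono] at this
  rw [this]
  have h1 : (List.range n).take n = List.range n := by
    rw [List.take_range]; congr 1; omega
  have h2 : (List.range n).drop n = [] := by simp
  rw [h1, h2, show mono [] = 1 from rfl, mul_one]

lemma DmL_full_on_Sp {n : ℕ} {u : WA} (hu : u ∈ Sp n) : DmL n u = Dlin u := by
  induction hu using Submodule.span_induction with
  | mem x hx =>
    obtain ⟨t, ht, rfl⟩ := hx
    rw [DmL_mono, Dlin_mono, ← ht, List.take_length, List.drop_length,
      show mono [] = 1 from rfl, mul_one]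
  | zero => simp
  | add y z _ _ h1 h2 => rw [map_add, map_add, h1, h2]
  | smul c y _ h1 => rw [map_smul, map_smul, h1]

lemma ev_main {n : ℕ} (hn : 2 ≤ n) :
    ev n (dswElement n * dswElement n) = ev n ((n : ℚ) • dswElement n) := by
  have hsp := Dyn_mem_Sp (List.range n)
  rw [List.length_range] at hsp
  rw [claimC n (by omega) le_rfl, ev_dsw hn, DmL_full_on_Sp hsp, map_smul, ev_dsw hn]
  have hLie : IsLie n (Dyn (List.range n)) := by
    have := IsLie_Dyn (l := List.range n) (by simp [List.range_eq_nil]; omega)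
    rwa [List.length_range] at this
  exact lemma2 hLie

/-! ### injectivity -/

def Hset (n : ℕ) : Set (Equiv.Perm ℕ) := {g | ∀ i, n ≤ i → g i = i}

lemma one_mem_Hset (n : ℕ) : (1 : Equiv.Perm ℕ) ∈ Hset n := fun i _ => rfl

lemma mul_mem_Hset {n : ℕ} {g h : Equiv.Perm ℕ} (hg : g ∈ Hset n) (hh : h ∈ Hset n) :
    g * h ∈ Hset n := by
  intro i hi
  show g (h i) = i
  rw [hh i hi, hg i hi]

lemma cyc_mem_Hset {m n : ℕ} (h : m ≤ n) : cyc m ∈ Hset n := fun i hi =>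
  cyc_apply_of_ge (by omega)

open scoped Classical in
lemma supp_dsw {n : ℕ} (m : ℕ) (hm : 1 ≤ m) (hmn : m ≤ n) :
    ↑(dswElement m).coeff.support ⊆ Hset n := by
  induction m with
  | zero => omega
  | succ k ih =>
    rcases Nat.eq_or_lt_of_le hm with h1 | h1
    · have hk : k = 0 := by omega
      subst hk
      rw [show dswElement 1 = 1 from rfl, MonoidAlgebra.one_def]
      intro x hx
      have := Finsupp.support_single_subset (Finset.mem_coe.mp hx)
      rw [Finset.mem_singleton] at this
      rw [this]; exact one_mem_Hset n
    · have hk : 1 ≤ k := by omega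
      rw [dsw_succ k hk]
      intro x hx
      have h2 := MonoidAlgebra.support_coeff_mul_subset _ (dswElement k) (Finset.mem_coe.mp hx)
      rw [Finset.mem_mul] at h2
      obtain ⟨a, ha, b, hb, rfl⟩ := h2
      have ha' : a ∈ Hset n := by
        have h3 := Finsupp.support_sub (f := (1 : GA).coeff)
          (g := (MonoidAlgebra.of ℚ (Equiv.Perm ℕ) (cyc (k+1))).coeff) ha
        rw [Finset.mem_union] at h3
        rcases h3 with h4 | h4
        · rw [MonoidAlgebra.one_def] at h4
          have := Finsupp.support_single_subset h4
          rw [Finset.mem_singleton] at this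
          rw [this]; exact one_mem_Hset n
        · rw [MonoidAlgebra.of_apply] at h4
          have := Finsupp.support_single_subset h4
          rw [Finset.mem_singleton] at this
          rw [this]; exact cyc_mem_Hset (by omega)
      exact mul_mem_Hset ha' (ih hk (by omega) hb)

def wordOf (n : ℕ) (g : Equiv.Perm ℕ) : FreeMonoid ℕ :=
  FreeMonoid.ofList ((List.range n).map ⇑g⁻¹)

lemma ev_eq_mapDomain (n : ℕ) (z : GA) :
    (ev n z).coeff = Finsupp.mapDomain (wordOf n) z.coeff := by
  induction z using MonoidAlgebra.induction_linear with
  | zero => simp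
  | add f g hf hg => rw [map_add, MonoidAlgebra.coeff_add, MonoidAlgebra.coeff_add, Finsupp.mapDomain_add, hf, hg]
  | single g c =>
    rw [ev_single, MonoidAlgebra.coeff_single, Finsupp.mapDomain_single]
    rw [mono, MonoidAlgebra.of_apply, MonoidAlgebra.smul_single', mul_one]
    rfl

lemma injOn_wordOf (n : ℕ) : Set.InjOn (wordOf n) (Hset n) := by
  intro g hg k hk he
  rw [wordOf, wordOf] at he
  have hl : (List.range n).map ⇑g⁻¹ = (List.range n).map ⇑k⁻¹ :=
    FreeMonoid.ofList.injective he
  have hlt : ∀ i ∈ List.range n, g⁻¹ i = k⁻¹ i := List.map_inj_left.mp hl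
  have hinv : ∀ p : Equiv.Perm ℕ, p ∈ Hset n → ∀ i, n ≤ i → p⁻¹ i = i := by
    intro p hp i hi
    apply p.injective
    rw [Equiv.Perm.inv_def, Equiv.apply_symm_apply, hp i hi]
  have : ∀ i, g⁻¹ i = k⁻¹ i := by
    intro i
    by_cases hi : i < n
    · exact hlt i (List.mem_range.mpr hi)
    · rw [hinv g hg i (by omega), hinv k hk i (by omega)]
  have hinveq : g⁻¹ = k⁻¹ := Equiv.ext this
  exact inv_injective hinveq

lemma main_identity {n : ℕ} (hn : 2 ≤ n) :
    dswElement n * dswElement n = (n : ℚ) • dswElement n := by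
  classical
  have hsupp : ↑(dswElement n).coeff.support ⊆ Hset n := supp_dsw n (by omega) le_rfl
  have hsupp2 : ↑(dswElement n * dswElement n).coeff.support ⊆ Hset n := by
    intro x hx
    have h2 := MonoidAlgebra.support_coeff_mul_subset (dswElement n) (dswElement n) (Finset.mem_coe.mp hx)
    rw [Finset.mem_mul] at h2
    obtain ⟨a, ha, b, hb, rfl⟩ := h2
    exact mul_mem_Hset (hsupp ha) (hsupp hb)
  have hsupp3 : ↑((n : ℚ) • dswElement n).coeff.support ⊆ Hset n :=
    fun x hx => hsupp (Finsupp.support_smul (Finset.mem_coe.mp hx))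
  apply MonoidAlgebra.coeff_injective
  apply Finsupp.mapDomain_injOn (Hset n) (injOn_wordOf n) hsupp2 hsupp3
  rw [← ev_eq_mapDomain, ← ev_eq_mapDomain]
  exact congrArg _ (ev_main hn)

end DSWAux
end DSW

/-- The Dynkin–Specht–Wever identity `βₙ ∘ βₙ = n · βₙ`; consequently, for odd `n`
(so `n` is invertible), `(1/n) · βₙ` is idempotent. -/
theorem stmt_6 :
    (∀ n : ℕ, 2 ≤ n → dswElement n * dswElement n = (n : ℚ) • dswElement n) ∧
    (∀ n : ℕ, 2 ≤ n → Odd n →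
      ((1 / (n : ℚ)) • dswElement n) * ((1 / (n : ℚ)) • dswElement n) =
        (1 / (n : ℚ)) • dswElement n) := by
  constructor
  · intro n hn
    exact DSWAux.main_identity hn
  · intro n hn _
    have h := DSWAux.main_identity hn
    have hne : (n : ℚ) ≠ 0 := Nat.cast_ne_zero.mpr (by omega)
    rw [smul_mul_smul_comm, h, smul_smul]
    congr 1
    field_simp
end

section
/- Let V be a graded 𝔽₂-vector space with basis {u, v}, |u| < |v|. Let β_{2k+1} : V^{⊗(2k+1)} → V^{⊗(2k+1)} be the Dynkin–Specht–Wever map (left-normed bracketing). Then β_{2k+1}(ad^k([u,v])(u)) = ad^k([u,v])(u) and β_{2k+1}(ad^k([u,v])(v)) = ad^k([u,v])(v), where ad^k([u,v])(x) denotes the iterated bracket [[...[x,[u,v]],...],[u,v]] (k times) viewed as an element of V^{⊗(2k+1)} via [a,b] = a⊗b + b⊗a. -/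
/-- The bracket `[a,b] = ab + ba` in characteristic 2. -/
def br2 {R : Type*} [Ring R] (a b : R) : R := a * b + b * a

/-- The expansion in the free algebra over `𝔽₂` on generators `{u, v}` (modelled on `Bool`,
`u = ι false`, `v = ι true`) of the left-normed commutator of a word, with `[a,b] = ab + ba`. -/
def lnb : List Bool → FreeAlgebra (ZMod 2) Bool
  | [] => 0
  | (a :: rest) =>
      rest.foldl (fun acc x => br2 acc (FreeAlgebra.ι (ZMod 2) x))
        (FreeAlgebra.ι (ZMod 2) a)

/-- Iterated adjoint action with `ad(x)(y) = [y,x]`, `[a,b] = ab + ba` (characteristic 2). -/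
def adPow2 (x : FreeAlgebra (ZMod 2) Bool) :
    ℕ → FreeAlgebra (ZMod 2) Bool → FreeAlgebra (ZMod 2) Bool
  | 0, y => y
  | (i + 1), y => br2 (adPow2 x i y) x

namespace Stmt11Aux

noncomputable abbrev F : Type := FreeAlgebra (ZMod 2) Bool

noncomputable abbrev jota : Bool → F := FreeAlgebra.ι (ZMod 2)

lemma two_zero (z : F) : z + z = 0 := by
  have h2 : (2 : ZMod 2) = 0 := rfl
  calc z + z = (2 : ZMod 2) • z := (two_smul _ z).symm
    _ = 0 := by rw [h2, zero_smul]

lemma char2_eq {x y z : F} (h : x = y + (z + z)) : x = y := by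
  rw [two_zero, add_zero] at h; exact h

lemma br2_add_left (a b c : F) : br2 (a + b) c = br2 a c + br2 b c := by
  simp only [br2, add_mul, mul_add]; abel

lemma br2_zero_left (c : F) : br2 0 c = 0 := by simp [br2]

lemma br2_comm (a b : F) : br2 a b = br2 b a := by simp only [br2]; abel

/-- char-2 Jacobi identity for the symmetrized bracket. -/
lemma jacobi (y a b : F) :
    br2 (br2 y a) b + br2 (br2 y b) a = br2 y (br2 a b) := by
  apply char2_eq (z := a * y * b + b * y * a)
  simp only [br2, add_mul, mul_add, mul_assoc]
  abel

lemma sum_map_flatMap {α β : Type*} (l : List α) (g : α → List β) (h : β → F) :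
    ((l.flatMap g).map h).sum = (l.map fun a => ((g a).map h).sum).sum := by
  induction l with
  | nil => simp
  | cons a t ih => simp [List.flatMap_cons, ih]

/-- The words appearing in the expansion of `ad^k([u,v])(x)`. -/
def words : ℕ → Bool → List (List Bool)
  | 0, x => [[x]]
  | (k + 1), x =>
      (words k x).flatMap fun w =>
        [w ++ [false, true], w ++ [true, false],
         false :: true :: w, true :: false :: w]

lemma words_length {k : ℕ} {x : Bool} {w : List Bool} (hw : w ∈ words k x) :
    w.length = 2 * k + 1 := by
  induction k generalizing w with
  | zero => simp [words] at hw; simp [hw]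
  | succ k ih =>
    simp only [words, List.mem_flatMap] at hw
    obtain ⟨w', hw', hmem⟩ := hw
    have hl := ih hw'
    simp only [List.mem_cons, List.mem_singleton, List.not_mem_nil, or_false] at hmem
    rcases hmem with rfl | rfl | rfl | rfl <;> simp [hl] <;> ring

lemma words_ne_nil {k : ℕ} {x : Bool} {w : List Bool} (hw : w ∈ words k x) :
    w ≠ [] := by
  intro h
  have := words_length hw
  rw [h] at this
  simp at this

/-- product of the letters of a word -/
noncomputable def P (l : List Bool) : F := (l.map jota).prod

lemma P_append_pair (w : List Bool) (a b : Bool) :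
    P (w ++ [a, b]) = P w * jota a * jota b := by
  simp [P, List.map_append, List.prod_append, mul_assoc]

lemma P_cons_cons (a b : Bool) (w : List Bool) :
    P (a :: b :: w) = jota a * (jota b * P w) := by
  simp [P]

lemma lnb_append_pair (h : Bool) (t : List Bool) (a b : Bool) :
    lnb ((h :: t) ++ [a, b]) = br2 (br2 (lnb (h :: t)) (jota a)) (jota b) := by
  simp only [lnb, List.cons_append, List.foldl_append, List.foldl_cons, List.foldl_nil]

lemma lnb_cons_cons (a b : Bool) (w : List Bool) :
    lnb (a :: b :: w) = w.foldl (fun acc x => br2 acc (jota x)) (br2 (jota a) (jota b)) := by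
  simp only [lnb, List.foldl_cons]

lemma foldl_add (w : List Bool) (x y : F) :
    w.foldl (fun acc x => br2 acc (jota x)) (x + y)
      = w.foldl (fun acc x => br2 acc (jota x)) x
        + w.foldl (fun acc x => br2 acc (jota x)) y := by
  induction w generalizing x y with
  | nil => simp
  | cons a t ih => simp only [List.foldl_cons, br2_add_left, ih]

lemma sum_map_br2 (l : List (List Bool)) (f : List Bool → F) (c : F) :
    (l.map fun w => br2 (f w) c).sum = br2 (l.map f).sum c := by
  induction l with
  | nil => simp [br2_zero_left]
  | cons a t ih => simp [ih, br2_add_left]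

/-- the element `u`, `v`, and `c = [u,v]` -/
noncomputable def uu : F := jota false
noncomputable def vv : F := jota true
noncomputable def cc : F := br2 uu vv

lemma sum_P (k : ℕ) (x : Bool) :
    ((words k x).map P).sum = adPow2 cc k (jota x) := by
  induction k with
  | zero => simp [words, P, adPow2]
  | succ k ih =>
    have : ((words (k+1) x).map P).sum
        = ((words k x).map fun w => br2 (P w) cc).sum := by
      rw [words, sum_map_flatMap]
      refine congrArg List.sum (List.map_congr_left (fun w hw => ?_))
      simp only [List.map_cons, List.map_nil, List.sum_cons, List.sum_nil,
        add_zero, P_append_pair, P_cons_cons]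
      simp only [br2, cc, uu, vv, mul_add, add_mul, mul_assoc]
      abel
    rw [this, sum_map_br2, ih]
    rfl

lemma sum_lnb (k : ℕ) (x : Bool) :
    ((words k x).map lnb).sum = adPow2 cc k (jota x) := by
  induction k with
  | zero => simp [words, lnb, adPow2, jota]
  | succ k ih =>
    have key : ((words (k+1) x).map lnb).sum
        = ((words k x).map fun w => br2 (lnb w) cc).sum := by
      rw [words, sum_map_flatMap]
      refine congrArg List.sum (List.map_congr_left (fun w hw => ?_))
      obtain ⟨h, t, rfl⟩ := List.exists_cons_of_ne_nil (words_ne_nil hw)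
      have habc : ∀ A B C : F, A + (B + (C + C)) = A + B := by
        intro A B C; rw [two_zero, add_zero]
      simp only [List.map_cons, List.map_nil, List.sum_cons, List.sum_nil,
        add_zero, lnb_append_pair]
      rw [lnb_cons_cons, lnb_cons_cons]
      rw [br2_comm (jota true) (jota false)]
      rw [habc, jacobi]
      rfl
    rw [key, sum_map_br2, ih]
    rfl

end Stmt11Aux

open Stmt11Aux in
/-- Let `β` be the (linear) Dynkin–Specht–Wever left-normed bracketing map in degree `2k+1`,
i.e. `β` sends each pure tensor (word) of length `2k+1` to the expansion of its left-normed
commutator.  Then `ad^k([u,v])(u)` and `ad^k([u,v])(v)` are fixed by `β`. -/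
theorem stmt_11 (k : ℕ)
    (β : FreeAlgebra (ZMod 2) Bool →ₗ[ZMod 2] FreeAlgebra (ZMod 2) Bool)
    (hβ : ∀ l : List Bool, l.length = 2 * k + 1 →
      β ((l.map (FreeAlgebra.ι (ZMod 2))).prod) = lnb l) :
    let u : FreeAlgebra (ZMod 2) Bool := FreeAlgebra.ι (ZMod 2) false
    let v : FreeAlgebra (ZMod 2) Bool := FreeAlgebra.ι (ZMod 2) true
    β (adPow2 (br2 u v) k u) = adPow2 (br2 u v) k u ∧
      β (adPow2 (br2 u v) k v) = adPow2 (br2 u v) k v := by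
  intro u v
  have main : ∀ x : Bool, β (adPow2 (br2 u v) k (jota x)) = adPow2 (br2 u v) k (jota x) := by
    intro x
    have hc : br2 u v = cc := rfl
    rw [hc, ← sum_P k x, map_list_sum, List.map_map]
    rw [show (⇑β ∘ P) = fun w => β (P w) from rfl]
    have : ∀ w ∈ words k x, β (P w) = lnb w := by
      intro w hw
      have := hβ w (words_length hw)
      simpa [P, jota] using this
    calc ((words k x).map fun w => β (P w)).sum
        = ((words k x).map lnb).sum := by
          congr 1; exact List.map_congr_left this
      _ = adPow2 cc k (jota x) := sum_lnb k x
      _ = ((words k x).map P).sum := (sum_P k x).symm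
  exact ⟨main false, main true⟩
end
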